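/- If S < C·σ²/φ(1), then for every θ the first-order condition (S/σ)·φ((θ−m)/σ) = C·m has exactly one solution m in (0, ∞), and this m is the unique global maximizer of u(·; θ) on [0, ∞). -/

import Mathlib

open MeasureTheory Filter Set

/-- Standard normal probability density function. -/
noncomputable def stdphi (z : ℝ) : ℝ := (Real.sqrt (2 * Real.pi))⁻¹ * Real.exp (-z ^ 2 / 2)

/-- Standard normal cumulative distribution function. -/
noncomputable def stdPhi (x : ℝ) : ℝ := ∫ t in Set.Iic x, stdphi t

lemma stdphi_pos (z : ℝ) : 0 < stdphi z := by
  unfold stdphi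
  positivity

lemma stdphi_even (z : ℝ) : stdphi (-z) = stdphi z := by
  unfold stdphi; ring_nf

lemma stdphi_le (z : ℝ) : stdphi z ≤ (Real.sqrt (2 * Real.pi))⁻¹ := by
  unfold stdphi
  have h1 : Real.exp (-z ^ 2 / 2) ≤ 1 := by
    rw [Real.exp_le_one_iff]; nlinarith [sq_nonneg z]
  have h2 : (0:ℝ) ≤ (Real.sqrt (2 * Real.pi))⁻¹ := by positivity
  nlinarith

lemma abs_mul_stdphi_le (z : ℝ) : |z| * stdphi z ≤ stdphi 1 := by
  have c0 : (0:ℝ) < (Real.sqrt (2 * Real.pi))⁻¹ := by positivity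
  have h1 : |z| ≤ Real.exp ((z ^ 2 - 1) / 2) := by
    have := Real.add_one_le_exp ((z ^ 2 - 1) / 2)
    nlinarith [sq_abs z, sq_nonneg (|z| - 1), abs_nonneg z]
  have h2 : |z| * Real.exp (-z ^ 2 / 2) ≤ Real.exp (-(1:ℝ) / 2) := by
    calc |z| * Real.exp (-z ^ 2 / 2) ≤ Real.exp ((z ^ 2 - 1) / 2) * Real.exp (-z ^ 2 / 2) :=
          mul_le_mul_of_nonneg_right h1 (Real.exp_nonneg _)
    _ = Real.exp (-(1:ℝ)/2) := by rw [← Real.exp_add]; ring_nf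
  unfold stdphi
  calc |z| * ((Real.sqrt (2*Real.pi))⁻¹ * Real.exp (-z^2/2))
      = (Real.sqrt (2*Real.pi))⁻¹ * (|z| * Real.exp (-z^2/2)) := by ring
    _ ≤ (Real.sqrt (2*Real.pi))⁻¹ * Real.exp (-(1:ℝ)/2) :=
        mul_le_mul_of_nonneg_left h2 (le_of_lt c0)
    _ = (Real.sqrt (2*Real.pi))⁻¹ * Real.exp (-(1:ℝ)^2/2) := by norm_num

lemma hasDerivAt_stdphi (z : ℝ) : HasDerivAt stdphi (-z * stdphi z) z := by
  have h1 : HasDerivAt (fun w : ℝ => -w ^ 2 / 2) (-z) z := by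
    have h := ((hasDerivAt_pow 2 z).neg).div_const 2
    refine h.congr_deriv ?_
    ring
  have h2 := (h1.exp).const_mul ((Real.sqrt (2 * Real.pi))⁻¹)
  refine h2.congr_deriv ?_
  unfold stdphi; ring

lemma integrable_stdphi : Integrable stdphi := by
  have h := (integrable_exp_neg_mul_sq (by norm_num : (0:ℝ) < 1/2)).const_mul
    ((Real.sqrt (2 * Real.pi))⁻¹)
  convert h using 2 with z
  unfold stdphi; ring_nf

lemma continuous_stdphi : Continuous stdphi := by
  unfold stdphi; continuity

lemma hasDerivAt_stdPhi (x : ℝ) : HasDerivAt stdPhi (stdphi x) x := by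
  have hint := integrable_stdphi
  have h2 : HasDerivAt (fun y => ∫ t in (0:ℝ)..y, stdphi t) (stdphi x) x :=
    (continuous_stdphi.integral_hasStrictDerivAt 0 x).hasDerivAt
  have h3 := h2.const_add (∫ t in Set.Iic (0:ℝ), stdphi t)
  apply h3.congr_of_eventuallyEq
  filter_upwards with y
  have := intervalIntegral.integral_Iic_sub_Iic (hint.integrableOn) (hint.integrableOn)
    (a := 0) (b := y)
  unfold stdPhi
  linarith [this]

theorem stmt4 (S C σ : ℝ) (hS : 0 < S) (hC : 0 < C) (hσ : 0 < σ)
    (hlt : S < C * σ ^ 2 / stdphi 1) :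
    ∀ θ : ℝ, ∃ m : ℝ,
      0 < m ∧
      S / σ * stdphi ((θ - m) / σ) = C * m ∧
      IsMaxOn (fun m' : ℝ => S * stdPhi ((m' - θ) / σ) - C / 2 * m' ^ 2) (Set.Ici 0) m ∧
      (∀ m' : ℝ, 0 < m' → S / σ * stdphi ((θ - m') / σ) = C * m' → m' = m) ∧
      (∀ m' : ℝ, m' ∈ Set.Ici (0 : ℝ) →
        IsMaxOn (fun m'' : ℝ => S * stdPhi ((m'' - θ) / σ) - C / 2 * m'' ^ 2)
          (Set.Ici 0) m' → m' = m) := by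
  intro θ
  have hφ1 : 0 < stdphi 1 := stdphi_pos 1
  have hσ2 : (0:ℝ) < σ ^ 2 := by positivity
  have hSφ : S / σ ^ 2 * stdphi 1 < C := by
    rw [lt_div_iff₀ hφ1] at hlt
    rw [div_mul_eq_mul_div, div_lt_iff₀ hσ2]
    linarith
  set f : ℝ → ℝ := fun m' : ℝ => S * stdPhi ((m' - θ) / σ) - C / 2 * m' ^ 2 with hf
  set g : ℝ → ℝ := fun m' : ℝ => S / σ * stdphi ((m' - θ) / σ) - C * m' with hg
  have hinner : ∀ m : ℝ, HasDerivAt (fun m' : ℝ => (m' - θ) / σ) σ⁻¹ m := by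
    intro m
    simpa using ((hasDerivAt_id m).sub_const θ).div_const σ
  have hf' : ∀ m, HasDerivAt f (g m) m := by
    intro m
    have h1 := ((hasDerivAt_stdPhi ((m - θ) / σ)).comp m (hinner m)).const_mul S
    have h2 := (hasDerivAt_pow 2 m).const_mul (C / 2)
    have h3 := h1.sub h2
    refine h3.congr_deriv ?_
    simp only [hg]
    field_simp
    ring
  have hg' : ∀ m, HasDerivAt g
      (S / σ * (-((m - θ) / σ) * stdphi ((m - θ) / σ)) * σ⁻¹ - C) m := by
    intro m
    have h1 := ((hasDerivAt_stdphi ((m - θ) / σ)).comp m (hinner m)).const_mul (S / σ)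
    have h2 := (hasDerivAt_id m).const_mul C
    have h3 := h1.sub h2
    refine h3.congr_deriv ?_
    ring
  have hgneg : ∀ m, deriv g m < 0 := by
    intro m
    rw [(hg' m).deriv]
    set z := (m - θ) / σ with hz
    have hb : -z * stdphi z ≤ stdphi 1 := by
      have h1 := abs_mul_stdphi_le z
      nlinarith [stdphi_pos z, neg_abs_le z, abs_nonneg z]
    have he : S / σ * (-z * stdphi z) * σ⁻¹ = S / σ ^ 2 * (-z * stdphi z) := by
      ring
    rw [he]
    have : S / σ ^ 2 * (-z * stdphi z) ≤ S / σ ^ 2 * stdphi 1 :=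
      mul_le_mul_of_nonneg_left hb (by positivity)
    linarith
  have hgdiff : ∀ m, DifferentiableAt ℝ g m := fun m => (hg' m).differentiableAt
  have hanti : StrictAnti g := strictAnti_of_deriv_neg hgneg
  have hgcont : Continuous g := by
    rw [continuous_iff_continuousAt]; exact fun m => (hgdiff m).continuousAt
  have hg0 : 0 < g 0 := by
    have : g 0 = S / σ * stdphi ((0 - θ) / σ) := by simp [hg]
    rw [this]
    have := stdphi_pos ((0 - θ) / σ)
    positivity
  set M : ℝ := S / (σ * C) * (Real.sqrt (2 * Real.pi))⁻¹ + 1 with hM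
  have hM0 : (0:ℝ) ≤ M := by
    rw [hM]; positivity
  have hgM : g M < 0 := by
    have h1 : stdphi ((M - θ) / σ) ≤ (Real.sqrt (2 * Real.pi))⁻¹ := stdphi_le _
    have h2 : C * M = S / σ * (Real.sqrt (2 * Real.pi))⁻¹ + C := by
      rw [hM]; field_simp
    have h3 : S / σ * stdphi ((M - θ) / σ) ≤ S / σ * (Real.sqrt (2 * Real.pi))⁻¹ :=
      mul_le_mul_of_nonneg_left h1 (by positivity)
    simp only [hg]
    linarith
  have hmem : (0:ℝ) ∈ Set.Icc (g M) (g 0) := ⟨le_of_lt hgM, le_of_lt hg0⟩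
  obtain ⟨m, hmIcc, hgm⟩ :=
    intermediate_value_Icc' hM0 hgcont.continuousOn hmem
  have hm0 : 0 < m := by
    by_contra h
    push_neg at h
    have := hanti.antitone h
    rw [hgm] at this
    linarith
  have hfoc : S / σ * stdphi ((θ - m) / σ) = C * m := by
    have he : (θ - m) / σ = -((m - θ) / σ) := by ring
    rw [he, stdphi_even]
    simp only [hg] at hgm
    linarith
  have hpos : ∀ x, x < m → 0 < g x := by
    intro x hx
    have := hanti hx
    rw [hgm] at this
    linarith
  have hneg : ∀ x, m < x → g x < 0 := by
    intro x hx
    have := hanti hx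
    rw [hgm] at this
    linarith
  have hfdiff : ∀ x, DifferentiableAt ℝ f x := fun x => (hf' x).differentiableAt
  have hfcont : Continuous f := by
    rw [continuous_iff_continuousAt]; exact fun x => (hfdiff x).continuousAt
  have hmono : StrictMonoOn f (Set.Icc 0 m) := by
    apply strictMonoOn_of_deriv_pos (convex_Icc 0 m) hfcont.continuousOn
    intro x hx
    rw [interior_Icc] at hx
    rw [(hf' x).deriv]
    exact hpos x hx.2
  have hanti2 : StrictAntiOn f (Set.Ici m) := by
    apply strictAntiOn_of_deriv_neg (convex_Ici m) hfcont.continuousOn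
    intro x hx
    rw [interior_Ici] at hx
    rw [(hf' x).deriv]
    exact hneg x hx
  have hmax : IsMaxOn f (Set.Ici 0) m := by
    intro x hx
    simp only [Set.mem_setOf_eq]
    rcases le_or_gt x m with h | h
    · rcases eq_or_lt_of_le h with rfl | h'
      · exact le_refl _
      · exact le_of_lt (hmono ⟨hx, h⟩ ⟨le_of_lt hm0, le_refl m⟩ h')
    · exact le_of_lt (hanti2 (le_refl m : m ∈ Set.Ici m) (le_of_lt h) h)
  refine ⟨m, hm0, hfoc, hmax, ?_, ?_⟩
  · intro m' hm' heq
    have he : (θ - m') / σ = -((m' - θ) / σ) := by ring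
    rw [he, stdphi_even] at heq
    have hgm' : g m' = 0 := by simp only [hg]; linarith
    exact hanti.injective (by rw [hgm', hgm])
  · intro m' hm' hmax'
    by_contra hne
    have h1 : f m ≤ f m' := hmax' (Set.mem_Ici.mpr (le_of_lt hm0))
    rcases lt_or_gt_of_ne hne with h | h
    · have := hmono ⟨hm', le_of_lt h⟩ ⟨le_of_lt hm0, le_refl m⟩ h
      linarith
    · have := hanti2 (le_refl m : m ∈ Set.Ici m) (le_of_lt h) h
      linarith
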